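/- Let n ≥ 2 and let f : (Fin n → ℂ) → ℂ be a symmetric function, i.e. f(x ∘ σ) = f(x) for every permutation σ of Fin n. Suppose f is twice continuously ℂ-differentiable in a neighborhood of the diagonal point (z, z, …, z). Let g : ℂ → ℂ denote the diagonal restriction g(z) = f(z, z, …, z). Then g″(z) = n · ∂₁²f(z, …, z) + n(n−1) · ∂₁∂₂f(z, …, z), where ∂₁²f is the repeated partial derivative in the first coordinate and ∂₁∂₂f is the mixed partial derivative in the first two coordinates, both evaluated on the diagonal. -/

import Mathlib

open Filter Topology


set_option maxHeartbeats 1000000 in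
/-- second identity of equation (6.3), Lemma 6.4.
If `f : (Fin n → ℂ) → ℂ` (with `n ≥ 2`) is symmetric and twice continuously
ℂ-differentiable near the diagonal point `(z, …, z)`, then the second derivative
of the diagonal restriction `g(w) = f(w, …, w)` satisfies
`g″(z) = n ∂₁²f(z,…,z) + n(n−1) ∂₁∂₂f(z,…,z)`. -/
theorem diagonal_second_deriv_symmetric_fun
    (n : ℕ) (hn : 2 ≤ n) (f : (Fin n → ℂ) → ℂ) (z : ℂ)
    (hsym : ∀ (σ : Equiv.Perm (Fin n)) (x : Fin n → ℂ), f (x ∘ σ) = f x)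
    (hC2 : ContDiffAt ℂ 2 f (fun _ => z)) :
    deriv (deriv (fun w : ℂ => f (fun _ => w))) z =
      (n : ℂ) * fderiv ℂ (fun p => fderiv ℂ f p (Pi.single (⟨0, by omega⟩ : Fin n) 1))
          (fun _ => z) (Pi.single (⟨0, by omega⟩ : Fin n) 1)
      + (n : ℂ) * ((n : ℂ) - 1) *
          fderiv ℂ (fun p => fderiv ℂ f p (Pi.single (⟨0, by omega⟩ : Fin n) 1))
            (fun _ => z) (Pi.single (⟨1, by omega⟩ : Fin n) 1) := by
  classical
  set p₀ : Fin n → ℂ := fun _ => z with hp₀def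
  set i0 : Fin n := ⟨0, by omega⟩ with hi0def
  set i1 : Fin n := ⟨1, by omega⟩ with hi1def
  have hi01 : i0 ≠ i1 := by simp [hi0def, hi1def, Fin.ext_iff]
  -- the diagonal continuous linear map
  set d : ℂ →L[ℂ] (Fin n → ℂ) :=
    ContinuousLinearMap.pi (fun _ => ContinuousLinearMap.id ℂ ℂ) with hddef
  -- permutation precomposition maps
  set T : Equiv.Perm (Fin n) → ((Fin n → ℂ) →L[ℂ] (Fin n → ℂ)) :=
    fun σ => ContinuousLinearMap.pi (fun i => ContinuousLinearMap.proj (σ i)) with hTdef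
  have hT : ∀ σ x, T σ x = x ∘ σ := fun σ x => rfl
  set e : Fin n → (Fin n → ℂ) := fun i => Pi.single i 1 with hedef
  have hTe : ∀ (σ : Equiv.Perm (Fin n)) (i : Fin n), T σ (e i) = e (σ⁻¹ i) := by
    intro σ i
    funext k
    have h0 : (T σ (e i)) k = e i (σ k) := rfl
    rw [h0]
    simp only [hedef, Pi.single_apply]
    refine if_congr ?_ rfl rfl
    rw [Equiv.Perm.inv_def, Equiv.eq_symm_apply]
  -- differentiability facts
  have hf1 : ∀ᶠ p in 𝓝 p₀, DifferentiableAt ℂ f p := by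
    have := hC2.eventually (by norm_num)
    exact this.mono (fun p hp => hp.differentiableAt two_ne_zero)
  have hfd : DifferentiableAt ℂ (fderiv ℂ f) p₀ :=
    (hC2.fderiv_right (m := 1) (by norm_num)).differentiableAt one_ne_zero
  set A : (Fin n → ℂ) →L[ℂ] ((Fin n → ℂ) →L[ℂ] ℂ) := fderiv ℂ (fderiv ℂ f) p₀ with hAdef
  -- permutation invariance of A
  have hA : ∀ (σ : Equiv.Perm (Fin n)) (w u : Fin n → ℂ),
      A w u = A (T σ w) (T σ u) := by
    intro σ w u
    set compR : ((Fin n → ℂ) →L[ℂ] ℂ) →L[ℂ] ((Fin n → ℂ) →L[ℂ] ℂ) :=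
      (ContinuousLinearMap.compL ℂ (Fin n → ℂ) (Fin n → ℂ) ℂ).flip (T σ) with hcompRdef
    have hTp₀ : T σ p₀ = p₀ := rfl
    have h2 : ∀ᶠ p in 𝓝 p₀, DifferentiableAt ℂ f (T σ p) :=
      ((T σ).continuous.tendsto p₀).eventually hf1
    have h1 : (fderiv ℂ f) =ᶠ[𝓝 p₀] (fun p => compR (fderiv ℂ f (T σ p))) := by
      filter_upwards [h2] with p hp
      have hcomp : f ∘ (T σ) = f := funext fun x => hsym σ x
      have : fderiv ℂ (f ∘ (T σ)) p = (fderiv ℂ f (T σ p)).comp (T σ) := by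
        rw [fderiv_comp p hp (T σ).differentiableAt, (T σ).fderiv]
      calc fderiv ℂ f p = fderiv ℂ (f ∘ (T σ)) p := by rw [hcomp]
        _ = (fderiv ℂ f (T σ p)).comp (T σ) := this
        _ = compR (fderiv ℂ f (T σ p)) := rfl
    have h4 : HasFDerivAt (fun p => compR (fderiv ℂ f (T σ p)))
        (compR.comp (A.comp (T σ))) p₀ :=
      compR.hasFDerivAt.comp p₀ (hfd.hasFDerivAt.comp p₀ (T σ).hasFDerivAt)
    have h5 : A = compR.comp (A.comp (T σ)) := by
      have h9 := h1.fderiv_eq (𝕜 := ℂ)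
      rw [h4.fderiv] at h9
      exact h9
    conv_lhs => rw [h5]
    rfl
  -- values of A on basis vectors
  have hAd : ∀ i : Fin n, A (e i) (e i) = A (e i0) (e i0) := by
    intro i
    have h := hA (Equiv.swap i0 i) (e i) (e i)
    simp only [hTe] at h
    have hs : (Equiv.swap i0 i)⁻¹ i = i0 := by
      rw [Equiv.swap_inv, Equiv.swap_apply_right]
    rw [h, hs]
  have hAe : ∀ i j : Fin n, i ≠ j → A (e i) (e j) = A (e i0) (e i1) := by
    intro i j hij
    set τ : Equiv.Perm (Fin n) := Equiv.swap i0 i with hτdef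
    set j' : Fin n := τ j with hj'def
    have hj'0 : j' ≠ i0 := by
      intro h
      have h2 : j = τ i0 := by
        rw [← h, hj'def, hτdef, Equiv.swap_apply_self]
      have h3 : τ i0 = i := by rw [hτdef, Equiv.swap_apply_left]
      exact hij (h2.trans h3).symm
    set σ : Equiv.Perm (Fin n) := (Equiv.swap i1 j').trans τ with hσdef
    have hσ0 : σ i0 = i := by
      rw [hσdef]
      simp only [Equiv.trans_apply]
      rw [Equiv.swap_apply_of_ne_of_ne hi01 (Ne.symm hj'0), hτdef]
      simp
    have hσ1 : σ i1 = j := by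
      rw [hσdef]
      simp only [Equiv.trans_apply]
      rw [Equiv.swap_apply_left, hj'def, hτdef, Equiv.swap_apply_self]
    have h := hA σ (e i) (e j)
    simp only [hTe] at h
    have hinv0 : σ⁻¹ i = i0 := by
      rw [Equiv.Perm.inv_def, Equiv.symm_apply_eq, hσ0]
    have hinv1 : σ⁻¹ j = i1 := by
      rw [Equiv.Perm.inv_def, Equiv.symm_apply_eq, hσ1]
    rw [h, hinv0, hinv1]
  -- identify RHS second partials
  have h7 : HasFDerivAt (fun p => fderiv ℂ f p (e i0))
      ((ContinuousLinearMap.apply ℂ ℂ (e i0)).comp A) p₀ :=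
    (ContinuousLinearMap.apply ℂ ℂ (e i0)).hasFDerivAt.comp p₀ hfd.hasFDerivAt
  have hRHS : ∀ u : Fin n → ℂ,
      fderiv ℂ (fun p => fderiv ℂ f p (e i0)) p₀ u = A u (e i0) := by
    intro u; rw [h7.fderiv]; rfl
  -- compute the LHS
  have hev : ∀ᶠ w in 𝓝 z, DifferentiableAt ℂ f (d w) :=
    (d.continuous.tendsto z).eventually hf1
  have hgd : deriv (fun w : ℂ => f (fun _ => w)) =ᶠ[𝓝 z]
      (fun w => fderiv ℂ f (d w) (d 1)) := by
    filter_upwards [hev] with w hw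
    have : HasFDerivAt (fun w : ℂ => f (d w)) ((fderiv ℂ f (d w)).comp d) w :=
      hw.hasFDerivAt.comp w d.hasFDerivAt
    exact this.hasDerivAt.deriv
  have h5 : HasFDerivAt (fun w : ℂ => fderiv ℂ f (d w)) (A.comp d) z :=
    hfd.hasFDerivAt.comp z d.hasFDerivAt
  have h6 : HasFDerivAt (fun w : ℂ => fderiv ℂ f (d w) (d 1))
      ((ContinuousLinearMap.apply ℂ ℂ (d 1)).comp (A.comp d)) z :=
    (ContinuousLinearMap.apply ℂ ℂ (d 1)).hasFDerivAt.comp z h5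
  have hLHS : deriv (deriv (fun w : ℂ => f (fun _ => w))) z = A (d 1) (d 1) := by
    rw [hgd.deriv_eq, h6.hasDerivAt.deriv]
    rfl
  -- expand the diagonal vector as a sum of basis vectors
  have hsum : (d 1 : Fin n → ℂ) = ∑ i, e i := by
    rw [hedef]
    exact (Finset.univ_sum_single (fun _ : Fin n => (1 : ℂ))).symm
  have hexp : A (d 1) (d 1) = ∑ i, ∑ j, A (e i) (e j) := by
    have hmap : A (∑ i, e i) = ∑ i, A (e i) := map_sum A _ _
    rw [hsum, hmap, ContinuousLinearMap.sum_apply]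
    exact Finset.sum_congr rfl (fun i _ => map_sum (A (e i)) _ _)
  have hinner : ∀ i : Fin n, (∑ j, A (e i) (e j))
      = A (e i0) (e i0) + ((n : ℂ) - 1) * A (e i0) (e i1) := by
    intro i
    rw [← Finset.add_sum_erase _ _ (Finset.mem_univ i)]
    congr 1
    · exact hAd i
    · rw [Finset.sum_congr rfl (fun j hj => hAe i j (Ne.symm (Finset.ne_of_mem_erase hj)))]
      rw [Finset.sum_const, Finset.card_erase_of_mem (Finset.mem_univ i),
        Finset.card_univ, Fintype.card_fin, nsmul_eq_mul]
      push_cast [Nat.cast_sub (by omega : 1 ≤ n)]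
      ring
  have htotal : A (d 1) (d 1) = (n : ℂ) * A (e i0) (e i0)
      + (n : ℂ) * ((n : ℂ) - 1) * A (e i0) (e i1) := by
    rw [hexp]
    rw [Finset.sum_congr rfl (fun i _ => hinner i), Finset.sum_const,
      Finset.card_univ, Fintype.card_fin, nsmul_eq_mul]
    ring
  -- finish
  have hb' : A (e i1) (e i0) = A (e i0) (e i1) := hAe i1 i0 (Ne.symm hi01)
  show deriv (deriv (fun w : ℂ => f (fun _ => w))) z =
      (n : ℂ) * fderiv ℂ (fun p => fderiv ℂ f p (e i0)) p₀ (e i0)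
      + (n : ℂ) * ((n : ℂ) - 1) * fderiv ℂ (fun p => fderiv ℂ f p (e i0)) p₀ (e i1)
  rw [hRHS, hRHS, hLHS, htotal, hb']
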